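/- Let p be a probability distribution on n states with values sorted nonincreasingly, and let G′ be the sequence defined recursively by G′(i) = max_{1≤j≤n} (∑_{k=1}^{j} p(k) − ∑_{k=1}^{i−1} G′(k)) / j. Then G′ is a probability distribution that couples MajorizingSet(p), and every distribution C that couples MajorizingSet(p) satisfies H(C) ≥ H(G′); hence G′ is a minimum entropy coupling of MajorizingSet(p). -/

import Mathlib

open Finset Real

/-- `q` is a member of `MajorizingSet p`: a sorted distribution on `n` states
whose prefix sums dominate those of `p` (i.e. `p ≼ q`). -/
def MajMem {n : ℕ} (p q : Fin n → ℝ) : Prop :=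
  Antitone q ∧ (∀ k, 0 ≤ q k) ∧ (∑ k, q k = 1) ∧
    ∀ i : Fin n, ∑ j ∈ Finset.Iic i, p j ≤ ∑ j ∈ Finset.Iic i, q j

/-- The distribution `C` couples the distribution `q` on `n` states. -/
def Couples {n : ℕ} (C : ℕ → ℝ) (q : Fin n → ℝ) : Prop :=
  ∃ f : ℕ → Fin n, ∀ i : Fin n, ∑' j : {j : ℕ // f j = i}, C j.1 = q i

section GreedyAux
open Filter

namespace GreedyMEC

variable {n : ℕ} [NeZero n]

noncomputable def gfun (S : Fin n → ℝ) (t : ℝ) : ℝ :=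
  univ.sup' univ_nonempty fun j : Fin n => (S j - t) / ((j : ℝ) + 1)

def lastF (n : ℕ) [NeZero n] : Fin n := ⟨n - 1, Nat.sub_lt (NeZero.pos n) one_pos⟩

lemma lastF_cast : ((lastF n : Fin n) : ℝ) + 1 = (n : ℝ) := by
  have h : (1:ℕ) ≤ n := NeZero.pos n
  simp only [lastF]
  push_cast [Nat.cast_sub h]
  ring

lemma gfun_ge (S : Fin n → ℝ) (hlast : S (lastF n) = 1) (t : ℝ) :
    (1 - t) / (n : ℝ) ≤ gfun S t := by
  have := Finset.le_sup' (fun j : Fin n => (S j - t) / ((j : ℝ) + 1)) (mem_univ (lastF n))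
  rwa [hlast, lastF_cast] at this

lemma gfun_le (S : Fin n → ℝ) (hSle : ∀ j, S j ≤ 1) {t : ℝ} (ht : t ≤ 1) :
    gfun S t ≤ 1 - t := by
  apply Finset.sup'_le
  intro j _
  rcases le_total (S j - t) 0 with h | h
  · exact le_trans (div_nonpos_of_nonpos_of_nonneg h (by positivity)) (by linarith)
  · have h1 : (S j - t) / ((j : ℝ) + 1) ≤ S j - t := by
      apply div_le_self h
      have : (0:ℝ) ≤ (j:ℝ) := Nat.cast_nonneg _
      linarith
    have := hSle j
    linarith

lemma gfun_anti (S : Fin n → ℝ) {t t' : ℝ} (h : t ≤ t') : gfun S t' ≤ gfun S t := by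
  apply Finset.sup'_le
  intro j _
  refine le_trans ?_ (Finset.le_sup' (fun j : Fin n => (S j - t) / ((j : ℝ) + 1)) (mem_univ j))
  apply div_le_div_of_nonneg_right (by linarith) (by positivity)

lemma add_gfun_mono (S : Fin n → ℝ) {t t' : ℝ} (h : t ≤ t') :
    t + gfun S t ≤ t' + gfun S t' := by
  obtain ⟨j, _, hj⟩ := Finset.exists_mem_eq_sup' (univ_nonempty)
    (fun j : Fin n => (S j - t) / ((j : ℝ) + 1))
  rw [gfun, hj]
  refine le_trans ?_ (add_le_add_right (Finset.le_sup'
    (fun j : Fin n => (S j - t') / ((j : ℝ) + 1)) (mem_univ j)) t')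
  have hj1 : (1:ℝ) ≤ (j:ℝ) + 1 := by have : (0:ℝ) ≤ (j:ℝ) := Nat.cast_nonneg _; linarith
  have h2 : (S j - t) / ((j : ℝ) + 1) - (S j - t') / ((j : ℝ) + 1) = (t' - t)/((j:ℝ)+1) := by
    field_simp
    ring
  have h3 : (t' - t)/((j:ℝ)+1) ≤ t' - t := div_le_self (by linarith) hj1
  linarith


section Basics

variable {n : ℕ} [NeZero n] (S : Fin n → ℝ) (G' : ℕ → ℝ)

variable (hSle : ∀ j, S j ≤ 1) (hlast : S (lastF n) = 1)
  (hG : ∀ i, G' i = gfun S (∑ k ∈ Finset.range i, G' k))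

include hSle hlast hG

lemma prefix_mem : ∀ m, 0 ≤ ∑ k ∈ range m, G' k ∧ ∑ k ∈ range m, G' k ≤ 1 := by
  intro m
  induction m with
  | zero => simp
  | succ m ih =>
    obtain ⟨h0, h1⟩ := ih
    rw [Finset.sum_range_succ, hG m]
    have hge := gfun_ge S hlast (∑ k ∈ range m, G' k)
    have hle := gfun_le S hSle h1
    have hn : (0:ℝ) < n := by exact_mod_cast NeZero.pos n
    constructor
    · have : 0 ≤ (1 - ∑ k ∈ range m, G' k) / n := by
        apply div_nonneg (by linarith) (le_of_lt hn)
      linarith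
    · linarith

lemma G'_nonneg : ∀ i, 0 ≤ G' i := by
  intro i
  obtain ⟨h0, h1⟩ := prefix_mem S G' hSle hlast hG i
  have hge := gfun_ge S hlast (∑ k ∈ range i, G' k)
  have hn : (0:ℝ) < n := by exact_mod_cast NeZero.pos n
  rw [hG i]
  have : 0 ≤ (1 - ∑ k ∈ range i, G' k) / n := div_nonneg (by linarith) (le_of_lt hn)
  linarith

lemma G'_le_one_sub : ∀ i, G' i ≤ 1 - ∑ k ∈ range i, G' k := by
  intro i
  rw [hG i]
  exact gfun_le S hSle (prefix_mem S G' hSle hlast hG i).2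

lemma G'_antitone : Antitone G' := by
  apply antitone_nat_of_succ_le
  intro m
  rw [hG m, hG (m+1)]
  apply gfun_anti
  rw [Finset.sum_range_succ]
  have := G'_nonneg S G' hSle hlast hG m
  linarith

lemma prefix_geo : ∀ m, 1 - ∑ k ∈ range m, G' k ≤ (1 - 1/(n:ℝ))^m := by
  have hn : (0:ℝ) < n := by exact_mod_cast NeZero.pos n
  have hn1 : (1:ℝ) ≤ n := by exact_mod_cast NeZero.pos n
  intro m
  induction m with
  | zero => simp
  | succ m ih =>
    rw [Finset.sum_range_succ, hG m, pow_succ]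
    have hge := gfun_ge S hlast (∑ k ∈ range m, G' k)
    obtain ⟨h0, h1⟩ := prefix_mem S G' hSle hlast hG m
    have key : 1 - (∑ k ∈ range m, G' k + gfun S (∑ k ∈ range m, G' k))
        ≤ (1 - ∑ k ∈ range m, G' k) * (1 - 1/(n:ℝ)) := by
      have expand : (1 - ∑ k ∈ range m, G' k) * (1 - 1/(n:ℝ))
          = (1 - ∑ k ∈ range m, G' k) - (1 - ∑ k ∈ range m, G' k)/n := by
        field_simp
      rw [expand]
      linarith
    refine le_trans key ?_
    have hfac : (0:ℝ) ≤ 1 - 1/(n:ℝ) := by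
      have : 1/(n:ℝ) ≤ 1 := by
        rw [div_le_one hn]; exact hn1
      linarith
    exact mul_le_mul_of_nonneg_right ih hfac

lemma prefix_tendsto : Tendsto (fun m => ∑ k ∈ range m, G' k) atTop (nhds 1) := by
  have hn : (0:ℝ) < n := by exact_mod_cast NeZero.pos n
  have hn1 : (1:ℝ) ≤ n := by exact_mod_cast NeZero.pos n
  have hfac0 : (0:ℝ) ≤ 1 - 1/(n:ℝ) := by
    have : 1/(n:ℝ) ≤ 1 := by rw [div_le_one hn]; exact hn1
    linarith
  have hfac1 : (1:ℝ) - 1/(n:ℝ) < 1 := by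
    have : 0 < 1/(n:ℝ) := by positivity
    linarith
  have hgeo : Tendsto (fun m : ℕ => 1 - (1 - 1/(n:ℝ))^m) atTop (nhds 1) := by
    have := (tendsto_const_nhds (x := (1:ℝ)) (f := atTop)).sub
      (tendsto_pow_atTop_nhds_zero_of_lt_one hfac0 hfac1)
    simpa using this
  apply tendsto_of_tendsto_of_tendsto_of_le_of_le hgeo tendsto_const_nhds
  · intro m
    have := prefix_geo S G' hSle hlast hG m
    linarith
  · intro m
    exact (prefix_mem S G' hSle hlast hG m).2

lemma G'_hasSum : HasSum G' 1 := by
  have hsummable : Summable G' :=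
    summable_of_sum_range_le (G'_nonneg S G' hSle hlast hG)
      (fun m => (prefix_mem S G' hSle hlast hG m).2)
  exact (hsummable.hasSum_iff_tendsto_nat).mpr (prefix_tendsto S G' hSle hlast hG)

end Basics

theorem sum_Iic_fin {n : ℕ} (j : Fin n) (h : ℕ → ℝ) :
    ∑ k ∈ Iic j, h k.val = ∑ i ∈ range (j.val+1), h i := by
  rw [show Iic j = univ.filter (fun k => k ≤ j) by ext k; simp]
  rw [Finset.sum_filter]
  have : ∀ a : Fin n, (if a ≤ j then h a.val else 0) = (fun k => if k ≤ j.val then h k else 0) a.val := by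
    intro a
    by_cases hc : a ≤ j
    · rw [if_pos hc]; exact (if_pos (Fin.le_def.mp hc)).symm
    · rw [if_neg hc]; exact (if_neg (fun hh => hc (Fin.le_def.mpr hh))).symm
  rw [Finset.sum_congr rfl (fun a _ => this a)]
  rw [Fin.sum_univ_eq_sum_range (fun k => if k ≤ j.val then h k else 0) n]
  rw [← Finset.sum_filter]
  congr 1
  ext k
  simp only [mem_filter, mem_range]
  omega

lemma min1_step {d x y : ℝ} (hd : 0 ≤ d) (hxy : x ≤ y) :
    min (y+d) 1 - min y 1 ≤ min (x+d) 1 - min x 1 := by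
  rcases le_total (x+d) 1 with h|h
  · rw [min_eq_left h, min_eq_left (by linarith : x ≤ 1)]
    rcases le_total (y+d) 1 with h2|h2
    · rw [min_eq_left h2, min_eq_left (by linarith : y ≤ 1)]; linarith
    · rw [min_eq_right h2]
      rcases le_total y 1 with h3|h3
      · rw [min_eq_left h3]; linarith
      · rw [min_eq_right h3]; linarith
  · rw [min_eq_right (by linarith : (1:ℝ) ≤ y + d), min_eq_right h]
    have : min x 1 ≤ min y 1 := min_le_min hxy (le_refl 1)
    linarith

lemma min1_diff_le {x y : ℝ} (h : y ≤ x) : min x 1 - min y 1 ≤ x - y := by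
  rcases le_total x 1 with h1|h1
  · rw [min_eq_left h1, min_eq_left (by linarith : y ≤ 1)]
  · rw [min_eq_right h1]
    rcases le_total y 1 with h2|h2
    · rw [min_eq_left h2]; linarith
    · rw [min_eq_right h2]; linarith

section StepA

variable {n : ℕ} [NeZero n] (p : Fin n → ℝ) (C : ℕ → ℝ)
variable (hlast : ∑ k ∈ Iic (lastF n), p k = 1)
  (hSle : ∀ j : Fin n, ∑ k ∈ Iic j, p k ≤ 1)
  (hCanti : Antitone C) (hCnn : ∀ j, 0 ≤ C j) (hCsum : HasSum C 1)
  (hcup : ∀ q : Fin n → ℝ, MajMem p q → Couples C q)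

include hlast hSle hCanti hCnn hCsum hcup

lemma C_le_gfun (m : ℕ) :
    C m ≤ gfun (fun j => ∑ k ∈ Iic j, p k) (∑ j ∈ range m, C j) := by
  classical
  obtain ⟨S, hSdef⟩ : ∃ S : Fin n → ℝ, S = fun j => ∑ k ∈ Iic j, p k := ⟨_, rfl⟩
  obtain ⟨u, hudef⟩ : ∃ u : ℝ, u = ∑ j ∈ range m, C j := ⟨_, rfl⟩
  rw [← hSdef, ← hudef]
  by_contra hcon
  push_neg at hcon
  obtain ⟨b, hbdef⟩ : ∃ b : ℝ, b = C m := ⟨_, rfl⟩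
  rw [← hbdef] at hcon
  have hSlast : S (lastF n) = 1 := by rw [hSdef]; exact hlast
  have hSle' : ∀ j, S j ≤ 1 := by intro j; rw [hSdef]; exact hSle j
  have hCsummable : Summable C := hCsum.summable
  have hbnn : 0 ≤ b := hbdef ▸ hCnn m
  have hu0 : 0 ≤ u := by rw [hudef]; exact Finset.sum_nonneg fun j _ => hCnn j
  have hu1 : u + b ≤ 1 := by
    have h1 : ∑ j ∈ range (m+1), C j ≤ ∑' j, C j :=
      Summable.sum_le_tsum (range (m+1)) (fun i _ => hCnn i) hCsummable
    rw [hCsum.tsum_eq, Finset.sum_range_succ] at h1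
    rw [hudef, hbdef]
    exact h1
  have hnR : (0:ℝ) < n := by exact_mod_cast NeZero.pos n
  have hb0 : 0 < b := by
    have hge : (1 - u)/(n:ℝ) ≤ gfun S u := by
      have := Finset.le_sup' (fun j : Fin n => (S j - u) / ((j : ℝ) + 1)) (mem_univ (lastF n))
      rwa [hSlast, lastF_cast] at this
    have : 0 ≤ (1 - u)/(n:ℝ) := div_nonneg (by linarith) (le_of_lt hnR)
    linarith
  have hstrict : ∀ j : Fin n, S j < u + ((j:ℝ)+1) * b := by
    intro j
    have h1 : (S j - u) / ((j : ℝ) + 1) ≤ gfun S u :=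
      Finset.le_sup' (fun j : Fin n => (S j - u) / ((j : ℝ) + 1)) (mem_univ j)
    have h2 : (S j - u) / ((j : ℝ) + 1) < b := lt_of_le_of_lt h1 hcon
    have hj : (0:ℝ) < (j:ℝ) + 1 := by positivity
    rw [div_lt_iff₀ hj] at h2
    nlinarith
  obtain ⟨ε', hεdef⟩ : ∃ e : ℝ, e = univ.inf' univ_nonempty
    (fun j : Fin n => u + ((j:ℝ)+1) * b - S j) := ⟨_, rfl⟩
  have hε0 : 0 < ε' := by
    rw [hεdef, Finset.lt_inf'_iff]
    intro j _
    have := hstrict j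
    linarith
  have hεle : ∀ j : Fin n, ε' ≤ u + ((j:ℝ)+1) * b - S j := fun j =>
    hεdef ▸ Finset.inf'_le _ (mem_univ j)
  obtain ⟨δ, hδdef⟩ : ∃ x : ℝ, x = min (ε'/(2*n)) (b/2) := ⟨_, rfl⟩
  have hδ0 : 0 < δ := by
    rw [hδdef]; apply lt_min <;> positivity
  have hδb : δ ≤ b/2 := hδdef ▸ min_le_right _ _
  have hδε : (n:ℝ) * δ ≤ ε'/2 := by
    have h1 : δ ≤ ε'/(2*n) := hδdef ▸ min_le_left _ _
    calc (n:ℝ) * δ ≤ (n:ℝ) * (ε'/(2*n)) := by nlinarith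
      _ = ε'/2 := by field_simp
  obtain ⟨c, hcdef⟩ : ∃ c : ℝ, c = u + b := ⟨_, rfl⟩
  have hc1 : c ≤ 1 := by rw [hcdef]; exact hu1
  obtain ⟨d, hddef⟩ : ∃ d : ℝ, d = b - δ := ⟨_, rfl⟩
  have hd0 : 0 < d := by rw [hddef]; linarith
  obtain ⟨R, hRdef⟩ : ∃ R : ℕ → ℝ,
      R = fun j : ℕ => if j = 0 then 0 else min (c - δ + ((j:ℝ) - 1) * d) 1 := ⟨_, rfl⟩
  have hR0 : R 0 = 0 := by rw [hRdef]; norm_num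
  have hRform : ∀ j : ℕ, 1 ≤ j → R j = min (c - δ + ((j:ℝ) - 1) * d) 1 := by
    intro j hj
    rw [hRdef]
    show (if j = 0 then (0:ℝ) else min (c - δ + ((j:ℝ) - 1) * d) 1) = _
    exact if_neg (by omega)
  have hR1 : R 1 = c - δ := by
    have hc0 : ((1:ℕ):ℝ) - 1 = 0 := by norm_num
    rw [hRform 1 le_rfl, hc0, zero_mul, add_zero]
    exact min_eq_left (by linarith)
  have hlastval : ε' ≤ u + (n:ℝ) * b - 1 := by
    have := hεle (lastF n)
    rwa [hSlast, lastF_cast] at this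
  have hn1 : (1:ℝ) ≤ (n:ℝ) := by exact_mod_cast NeZero.pos n
  have hRn : R n = 1 := by
    rw [hRform n (NeZero.pos n)]
    apply min_eq_right
    rw [hcdef, hddef]
    nlinarith
  obtain ⟨q, hqdef⟩ : ∃ q : Fin n → ℝ, q = fun k : Fin n => R ((k:ℕ)+1) - R (k:ℕ) := ⟨_, rfl⟩
  have hqval : ∀ k : Fin n, q k = R ((k:ℕ)+1) - R (k:ℕ) := fun k => by rw [hqdef]
  have hq0 : q 0 = c - δ := by
    rw [hqval 0, show ((0:Fin n):ℕ) = 0 from rfl, hR0, hR1, sub_zero]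
  have hstepform : ∀ k : ℕ, 1 ≤ k →
      R (k+1) - R k = min ((c - δ + ((k:ℝ) - 1) * d) + d) 1 - min (c - δ + ((k:ℝ) - 1) * d) 1 := by
    intro k hk
    rw [hRform (k+1) (by omega), hRform k hk]
    congr 2
    push_cast
    ring
  have hq_le_d : ∀ k : ℕ, 1 ≤ k → R (k+1) - R k ≤ d := by
    intro k hk
    rw [hstepform k hk]
    have := min1_diff_le (show c - δ + ((k:ℝ) - 1) * d ≤ (c - δ + ((k:ℝ) - 1) * d) + d by linarith)
    linarith
  have hq_nonneg_step : ∀ k : ℕ, 0 ≤ R (k+1) - R k := by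
    intro k
    rcases Nat.eq_zero_or_pos k with hk|hk
    · subst hk; rw [hR0, hR1]; linarith
    · rw [hRform (k+1) (by omega), hRform k hk]
      have h1 : min (c - δ + ((k:ℝ) - 1) * d) 1 ≤ min (c - δ + (((k+1:ℕ):ℝ) - 1) * d) 1 := by
        apply min_le_min _ (le_refl 1)
        push_cast
        nlinarith
      linarith
  have hq_nonneg : ∀ k : Fin n, 0 ≤ q k := fun k => by rw [hqval k]; exact hq_nonneg_step k
  have hq_anti : Antitone q := by
    intro k l hkl
    rcases Nat.eq_zero_or_pos (k:ℕ) with hk|hk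
    · rcases Nat.eq_zero_or_pos (l:ℕ) with hl|hl
      · have : k = l := Fin.ext (by omega)
        rw [this]
      · have hk0 : k = 0 := Fin.ext (by simpa using hk)
        rw [hk0, hq0, hqval l]
        have h1 := hq_le_d (l:ℕ) hl
        have hbc : b ≤ c := by rw [hcdef]; linarith
        rw [hddef] at h1
        linarith
    · have hl : 1 ≤ (l:ℕ) := le_trans hk hkl
      rw [hqval k, hqval l, hstepform (l:ℕ) hl, hstepform (k:ℕ) hk]
      apply min1_step (le_of_lt hd0)
      have : ((k:ℕ):ℝ) ≤ ((l:ℕ):ℝ) := by exact_mod_cast hkl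
      nlinarith
  have hq_sum : ∑ k, q k = 1 := by
    rw [hqdef]
    rw [Fin.sum_univ_eq_sum_range (fun k => R (k+1) - R k) n]
    rw [Finset.sum_range_sub R]
    rw [hRn, hR0]
    ring
  have hq_maj : ∀ j : Fin n, S j ≤ ∑ k ∈ Iic j, q k := by
    intro j
    have htel : ∑ k ∈ Iic j, q k = R ((j:ℕ)+1) := by
      have h1 : (∑ k ∈ Iic j, q k) = ∑ k ∈ Iic j, (fun i => R (i+1) - R i) k.val := by
        apply Finset.sum_congr rfl
        intro k _
        rw [hqval k]
      rw [h1, sum_Iic_fin j (fun i => R (i+1) - R i), Finset.sum_range_sub R, hR0, sub_zero]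
    rw [htel, hRform ((j:ℕ)+1) (by omega)]
    apply le_min _ (hSle' j)
    have hεj := hεle j
    have hjn : ((j:ℕ):ℝ) + 1 ≤ (n:ℝ) := by exact_mod_cast j.isLt
    have hδj : (((j:ℕ):ℝ)+1) * δ ≤ (n:ℝ) * δ := mul_le_mul_of_nonneg_right hjn (le_of_lt hδ0)
    have hcast : (((j:ℕ)+1:ℕ):ℝ) - 1 = ((j:ℕ):ℝ) := by push_cast; ring
    rw [hcast, hddef, hcdef]
    ring_nf at hεj hδj hδε ⊢
    linarith
  obtain ⟨f, hf⟩ := hcup q ⟨hq_anti, hq_nonneg, hq_sum, by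
    intro i
    have := hq_maj i
    rw [hSdef] at this
    exact this⟩
  have hfib_summable : ∀ i : Fin n, Summable (fun j : {j : ℕ // f j = i} => C j.1) :=
    fun i => hCsummable.subtype {j | f j = i}
  have hfk : ∀ k, k ≤ m → f k = 0 := by
    intro k hk
    by_contra hne
    have hpos : 1 ≤ ((f k : Fin n):ℕ) := by
      rcases Nat.eq_zero_or_pos ((f k : Fin n):ℕ) with h|h
      · exact absurd (Fin.ext (by simpa using h)) hne
      · exact h
    have h1 : C k ≤ q (f k) := by
      have := Summable.le_tsum (hfib_summable (f k)) ⟨k, rfl⟩ (fun j _ => hCnn j.1)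
      rwa [hf (f k)] at this
    have h2 : q (f k) ≤ d := by
      rw [hqval (f k)]
      exact hq_le_d _ hpos
    have h3 : b ≤ C k := hbdef ▸ hCanti hk
    rw [hddef] at h2
    linarith
  have hmain : c ≤ q 0 := by
    have h1 : ∑ j ∈ range (m+1), C j ≤ ∑' j, Set.indicator {j | f j = 0} C j := by
      have heq : ∀ j ∈ range (m+1), C j = Set.indicator {j | f j = 0} C j := by
        intro j hj
        rw [Set.indicator_apply, if_pos]
        exact hfk j (Nat.lt_succ_iff.mp (mem_range.mp hj))
      rw [Finset.sum_congr rfl heq]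
      apply Summable.sum_le_tsum
      · intro i _
        apply Set.indicator_nonneg (fun j _ => hCnn j)
      · exact hCsummable.indicator _
    have h2 : ∑' j, Set.indicator {j | f j = 0} C j = q 0 := by
      rw [← tsum_subtype {j | f j = 0} C]
      exact hf 0
    rw [h2, Finset.sum_range_succ] at h1
    rw [hcdef, hudef, hbdef]
    exact h1
  rw [hq0] at hmain
  linarith

end StepA

section Couple

variable {n : ℕ} [NeZero n] (S : Fin n → ℝ) (G' : ℕ → ℝ)
variable (hG'nn : ∀ i, 0 ≤ G' i)
  (hG : ∀ i, G' i = gfun S (∑ k ∈ Finset.range i, G' k))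
  (hpt : Tendsto (fun m => ∑ k ∈ range m, G' k) atTop (nhds 1))

include hG'nn hG hpt

lemma couples_of_maj (q : Fin n → ℝ) (hq_nonneg : ∀ k, 0 ≤ q k)
    (hq_sum : ∑ k, q k = 1) (hq_maj : ∀ j : Fin n, S j ≤ ∑ k ∈ Finset.Iic j, q k) :
    Couples G' q := by
  classical
  set F : (Fin n → ℝ) → Fin n := fun v => (Finset.exists_max_image univ v univ_nonempty).choose
    with hFdef
  have hF : ∀ (v : Fin n → ℝ) (b : Fin n), v b ≤ v (F v) := fun v b =>
    (Finset.exists_max_image univ v univ_nonempty).choose_spec.2 b (mem_univ b)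
  set r : ℕ → Fin n → ℝ :=
    fun i => Nat.rec q (fun i v => Function.update v (F v) (v (F v) - G' i)) i with hrdef
  have hrs : ∀ i, r (i+1) = Function.update (r i) (F (r i)) (r i (F (r i)) - G' i) :=
    fun i => rfl
  have hupdate : ∀ i (k : Fin n), r (i+1) k = r i k - (if F (r i) = k then G' i else 0) := by
    intro i k
    rw [hrs i, Function.update_apply]
    by_cases h : k = F (r i)
    · rw [if_pos h, if_pos h.symm, h]
    · rw [if_neg h, if_neg (fun hh => h hh.symm), sub_zero]
  have inv : ∀ i, (∀ k, 0 ≤ r i k) ∧ (∑ k, r i k = 1 - ∑ k ∈ range i, G' k) ∧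
      (∀ j : Fin n, ∃ s : Finset (Fin n), s.card = (j:ℕ)+1 ∧
        S j - ∑ k ∈ range i, G' k ≤ ∑ k ∈ s, r i k) := by
    intro i
    induction i with
    | zero =>
      refine ⟨hq_nonneg, by show ∑ k, q k = 1 - ∑ k ∈ range 0, G' k; simpa using hq_sum, fun j => ⟨Finset.Iic j, by simp [Fin.card_Iic], by
        show S j - ∑ k ∈ range 0, G' k ≤ ∑ k ∈ Finset.Iic j, q k; simpa using hq_maj j⟩⟩
    | succ i ih =>
      obtain ⟨h1, h2, h3⟩ := ih
      have key : G' i ≤ r i (F (r i)) := by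
        rw [hG i]
        apply Finset.sup'_le
        intro j _
        obtain ⟨s, hcard, hs⟩ := h3 j
        have hle : ∑ k ∈ s, r i k ≤ ∑ k ∈ s, r i (F (r i)) :=
          Finset.sum_le_sum fun k _ => hF (r i) k
        rw [Finset.sum_const, hcard, nsmul_eq_mul] at hle
        rw [div_le_iff₀ (by positivity)]
        push_cast at hle ⊢
        linarith
      have hsumite : ∀ s : Finset (Fin n), (∑ k ∈ s, if F (r i) = k then G' i else 0) ≤ G' i := by
        intro s
        have : (∑ k ∈ s, if k = F (r i) then G' i else 0) = if F (r i) ∈ s then G' i else 0 :=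
          Finset.sum_ite_eq' s (F (r i)) (fun _ => G' i)
        rw [show (∑ k ∈ s, if F (r i) = k then G' i else 0)
            = ∑ k ∈ s, if k = F (r i) then G' i else 0 from
          Finset.sum_congr rfl (fun k _ => by by_cases h : k = F (r i) <;> simp [h, eq_comm])]
        rw [this]
        split <;> [exact le_refl _; exact hG'nn i]
      refine ⟨?_, ?_, ?_⟩
      · intro k
        rw [hupdate i k]
        by_cases h : F (r i) = k
        · rw [if_pos h, ← h]
          linarith [key]
        · rw [if_neg h, sub_zero]; exact h1 k
      · have : ∑ k, r (i+1) k = ∑ k, (r i k - if F (r i) = k then G' i else 0) :=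
          Finset.sum_congr rfl (fun k _ => hupdate i k)
        rw [this, Finset.sum_sub_distrib, h2]
        have hii : (∑ k, if F (r i) = k then G' i else 0) = G' i := by
          rw [show (∑ k, if F (r i) = k then G' i else 0)
              = ∑ k : Fin n, if k = F (r i) then G' i else 0 from
            Finset.sum_congr rfl (fun k _ => by by_cases h : k = F (r i) <;> simp [h, eq_comm])]
          rw [Finset.sum_ite_eq' univ (F (r i)) (fun _ => G' i), if_pos (mem_univ _)]
        rw [hii, Finset.sum_range_succ]
        ring
      · intro j
        obtain ⟨s, hcard, hs⟩ := h3 j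
        refine ⟨s, hcard, ?_⟩
        have : ∑ k ∈ s, r (i+1) k = ∑ k ∈ s, r i k - ∑ k ∈ s, (if F (r i) = k then G' i else 0) := by
          rw [← Finset.sum_sub_distrib]
          exact Finset.sum_congr rfl (fun k _ => hupdate i k)
        rw [this, Finset.sum_range_succ]
        have := hsumite s
        linarith
  set f : ℕ → Fin n := fun j => F (r j) with hfdef
  have hassign : ∀ (k : Fin n) (i : ℕ),
      ∑ j ∈ range i, (if f j = k then G' j else 0) = q k - r i k := by
    intro k i
    induction i with
    | zero => simp [hrdef]
    | succ i ih =>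
      rw [Finset.sum_range_succ, ih, hupdate i k]
      ring
  refine ⟨f, fun k => ?_⟩
  set D : ℕ → ℝ := fun j => if f j = k then G' j else 0 with hDdef
  have hDnn : ∀ j, 0 ≤ D j := fun j => by
    simp only [hDdef]; split <;> [exact hG'nn j; exact le_refl 0]
  have hDle : ∀ i, ∑ j ∈ range i, D j ≤ q k := fun i => by
    rw [hassign k i]
    have := (inv i).1 k
    linarith
  have hDsummable : Summable D := summable_of_sum_range_le hDnn hDle
  have hr_tend : Tendsto (fun i => r i k) atTop (nhds 0) := by
    have hup : Tendsto (fun i => 1 - ∑ j ∈ range i, G' j) atTop (nhds 0) := by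
      have := (tendsto_const_nhds (x := (1:ℝ)) (f := atTop)).sub hpt
      simpa using this
    apply tendsto_of_tendsto_of_tendsto_of_le_of_le tendsto_const_nhds hup
    · intro i; exact (inv i).1 k
    · intro i
      have h2 := (inv i).2.1
      have hall : ∀ m : Fin n, 0 ≤ r i m := (inv i).1
      have hle : r i k ≤ ∑ m, r i m := Finset.single_le_sum (fun m _ => hall m) (mem_univ k)
      show r i k ≤ 1 - ∑ j ∈ range i, G' j
      linarith
  have hDhas : HasSum D (q k) := by
    rw [hDsummable.hasSum_iff_tendsto_nat]
    have : (fun i => ∑ j ∈ range i, D j) = fun i => q k - r i k := funext (hassign k)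
    rw [this]
    have := (tendsto_const_nhds (x := q k) (f := atTop)).sub hr_tend
    simpa using this
  have hsub : ∑' (j : {j : ℕ // f j = k}), G' j.1 = ∑' (j : ℕ), D j := by
    rw [show D = Set.indicator {j | f j = k} G' from funext fun j => by
      simp [hDdef, Set.indicator_apply, Set.mem_setOf_eq]]
    exact tsum_subtype {j | f j = k} G'
  rw [hsub, hDhas.tsum_eq]

end Couple

section PrefixLe

variable {n : ℕ} [NeZero n] (p : Fin n → ℝ) (C G' : ℕ → ℝ)
variable (hlast : ∑ k ∈ Iic (lastF n), p k = 1)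
  (hSle : ∀ j : Fin n, ∑ k ∈ Iic j, p k ≤ 1)
  (hCanti : Antitone C) (hCnn : ∀ j, 0 ≤ C j) (hCsum : HasSum C 1)
  (hcup : ∀ q : Fin n → ℝ, MajMem p q → Couples C q)
  (hG : ∀ i, G' i = gfun (fun j => ∑ k ∈ Iic j, p k) (∑ k ∈ Finset.range i, G' k))

include hlast hSle hCanti hCnn hCsum hcup hG

lemma prefix_le : ∀ m, ∑ j ∈ range m, C j ≤ ∑ j ∈ range m, G' j := by
  intro m
  induction m with
  | zero => simp
  | succ m ih =>
    rw [Finset.sum_range_succ, Finset.sum_range_succ]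
    have h1 := C_le_gfun p C hlast hSle hCanti hCnn hCsum hcup m
    have h2 := add_gfun_mono (fun j => ∑ k ∈ Iic j, p k) ih
    rw [hG m]
    linarith

end PrefixLe

lemma phi_tangent {c y : ℝ} (hc : 0 < c) (hy : 0 ≤ y) :
    -(y * Real.log y) ≤ -(c * Real.log c) + (-(Real.log c) - 1) * (y - c) := by
  rcases eq_or_lt_of_le hy with hy0 | hy0
  · rw [← hy0]
    simp
    nlinarith
  · have h1 := Real.log_le_sub_one_of_pos (div_pos hc hy0)
    rw [Real.log_div (ne_of_gt hc) (ne_of_gt hy0)] at h1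
    have h2 : y * (Real.log c - Real.log y) ≤ y * (c/y - 1) :=
      mul_le_mul_of_nonneg_left h1 (le_of_lt hy0)
    have h3 : y * (c/y - 1) = c - y := by field_simp
    rw [h3] at h2
    nlinarith

section StepB

variable (G' C : ℕ → ℝ)
variable (hGnn : ∀ i, 0 ≤ G' i) (hGsum : HasSum G' 1)
  (hCanti : Antitone C) (hCnn : ∀ j, 0 ≤ C j) (hCsum : HasSum C 1)
  (hpre : ∀ m, ∑ j ∈ range m, C j ≤ ∑ j ∈ range m, G' j)

include hGnn hGsum hCanti hCnn hCsum hpre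

lemma entropy_le (x : ℝ) (hx : HasSum (fun j => C j * Real.logb 2 (C j)⁻¹) x) :
    ∑' i, G' i * Real.logb 2 (G' i)⁻¹ ≤ x := by
  classical
  have hlog2 : (0:ℝ) < Real.log 2 := Real.log_pos (by norm_num)
  obtain ⟨φC, hφCdef⟩ : ∃ φ : ℕ → ℝ, φ = fun j => -(C j * Real.log (C j)) := ⟨_, rfl⟩
  obtain ⟨φG, hφGdef⟩ : ∃ φ : ℕ → ℝ, φ = fun j => -(G' j * Real.log (G' j)) := ⟨_, rfl⟩
  have hφCval : ∀ j, φC j = -(C j * Real.log (C j)) := fun j => by rw [hφCdef]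
  have hφGval : ∀ j, φG j = -(G' j * Real.log (G' j)) := fun j => by rw [hφGdef]
  have hent_form : ∀ (D : ℕ → ℝ) (j : ℕ), D j * Real.logb 2 (D j)⁻¹
      = -(D j * Real.log (D j)) / Real.log 2 := by
    intro D j
    rw [Real.logb, Real.log_inv]
    ring
  have hφC : HasSum φC (x * Real.log 2) := by
    have h1 : HasSum (fun j => φC j / Real.log 2) x := by
      have : (fun j => C j * Real.logb 2 (C j)⁻¹) = fun j => φC j / Real.log 2 := by
        funext j
        rw [hent_form C j, hφCval j]
      rwa [this] at hx
    have h2 := h1.mul_right (Real.log 2)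
    have : (fun j => φC j / Real.log 2 * Real.log 2) = φC := by
      funext j
      field_simp
    rwa [this] at h2
  set L : ℝ := x * Real.log 2 with hLdef
  have hCsummable : Summable C := hCsum.summable
  have hGsummable : Summable G' := hGsum.summable
  have hC_le_one : ∀ j, C j ≤ 1 := by
    intro j
    have := Summable.le_tsum hCsummable j (fun k _ => hCnn k)
    rwa [hCsum.tsum_eq] at this
  have hG_le_one : ∀ j, G' j ≤ 1 := by
    intro j
    have := Summable.le_tsum hGsummable j (fun k _ => hGnn k)
    rwa [hGsum.tsum_eq] at this
  have hφCnn : ∀ j, 0 ≤ φC j := by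
    intro j
    rw [hφCval j]
    have := Real.log_nonpos (hCnn j) (hC_le_one j)
    nlinarith [hCnn j]
  have hφGnn : ∀ j, 0 ≤ φG j := by
    intro j
    rw [hφGval j]
    have := Real.log_nonpos (hGnn j) (hG_le_one j)
    nlinarith [hGnn j]
  have hL0 : 0 ≤ L := by
    rw [← hφC.tsum_eq]
    exact tsum_nonneg hφCnn
  have hprefC_le_L : ∀ M, ∑ j ∈ range M, φC j ≤ L := by
    intro M
    rw [← hφC.tsum_eq]
    exact Summable.sum_le_tsum _ (fun j _ => hφCnn j) hφC.summable
  obtain ⟨v, hvdef⟩ : ∃ v : ℕ → ℝ, v = fun j => -(Real.log (C j)) := ⟨_, rfl⟩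
  have hvval : ∀ j, v j = -(Real.log (C j)) := fun j => by rw [hvdef]
  have hvnn : ∀ j, 0 ≤ v j := by
    intro j
    rw [hvval j]
    have := Real.log_nonpos (hCnn j) (hC_le_one j)
    linarith
  have hvmono : ∀ j k, j ≤ k → 0 < C k → v j ≤ v k := by
    intro j k hjk hk
    rw [hvval j, hvval k]
    have := Real.log_le_log hk (hCanti hjk)
    linarith
  -- Abel summation bound
  have habel : ∀ M, (∀ j, j ≤ M → 0 < C j) →
      ∑ j ∈ range (M+1), v j * (G' j - C j)
        ≤ v M * (∑ j ∈ range (M+1), G' j - ∑ j ∈ range (M+1), C j) := by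
    intro M
    induction M with
    | zero =>
      intro _
      simp [Finset.sum_range_one]
    | succ M ih =>
      intro hpos
      have h1 := ih (fun j hj => hpos j (by omega))
      rw [Finset.sum_range_succ (fun j => v j * (G' j - C j)) (M+1)]
      have hvM : v M ≤ v (M+1) := hvmono M (M+1) (by omega) (hpos (M+1) le_rfl)
      have hA : 0 ≤ ∑ j ∈ range (M+1), G' j - ∑ j ∈ range (M+1), C j := by
        have := hpre (M+1); linarith
      have h2 : v M * (∑ j ∈ range (M+1), G' j - ∑ j ∈ range (M+1), C j)
          ≤ v (M+1) * (∑ j ∈ range (M+1), G' j - ∑ j ∈ range (M+1), C j) :=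
        mul_le_mul_of_nonneg_right hvM hA
      rw [Finset.sum_range_succ G' (M+1), Finset.sum_range_succ C (M+1)]
      nlinarith
  -- main chain
  have hGpref_le_one : ∀ M, ∑ j ∈ range M, G' j ≤ 1 := by
    intro M
    have := Summable.sum_le_tsum (range M) (fun j _ => hGnn j) hGsummable
    rwa [hGsum.tsum_eq] at this
  have hchain : ∀ M, (∀ j, j ≤ M → 0 < C j) →
      ∑ j ∈ range (M+1), φG j ≤ L +
        v M * (∑ j ∈ range (M+1), G' j - ∑ j ∈ range (M+1), C j) := by
    intro M hpos
    have htang : ∀ j ∈ range (M+1), φG j ≤ φC j + (v j - 1) * (G' j - C j) := by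
      intro j hj
      have hcj : 0 < C j := hpos j (Nat.lt_succ_iff.mp (mem_range.mp hj))
      have := phi_tangent hcj (hGnn j)
      rw [hφGval j, hφCval j, hvval j]
      linarith [this]
    have h1 : ∑ j ∈ range (M+1), φG j ≤
        ∑ j ∈ range (M+1), (φC j + (v j - 1) * (G' j - C j)) :=
      Finset.sum_le_sum htang
    have h2 : ∑ j ∈ range (M+1), (φC j + (v j - 1) * (G' j - C j))
        = ∑ j ∈ range (M+1), φC j + ∑ j ∈ range (M+1), v j * (G' j - C j)
          - (∑ j ∈ range (M+1), G' j - ∑ j ∈ range (M+1), C j) := by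
      have e1 : ∀ j, φC j + (v j - 1) * (G' j - C j)
          = φC j + v j * (G' j - C j) - (G' j - C j) := by intro j; ring
      rw [Finset.sum_congr rfl (fun j _ => e1 j), Finset.sum_sub_distrib,
        Finset.sum_add_distrib, Finset.sum_sub_distrib]
    have h3 := habel M hpos
    have h4 := hprefC_le_L (M+1)
    have hA : 0 ≤ ∑ j ∈ range (M+1), G' j - ∑ j ∈ range (M+1), C j := by
      have := hpre (M+1); linarith
    linarith
  have htail_bound : ∀ M, 0 < C M →
      v M * (∑ j ∈ range (M+1), G' j - ∑ j ∈ range (M+1), C j) ≤ ∑' i, φC (i + M) := by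
    intro M hM
    have hCtail : ∑ j ∈ range M, C j + ∑' i, C (i + M) = 1 := by
      rw [Summable.sum_add_tsum_nat_add M hCsummable, hCsum.tsum_eq]
    have hA_le : ∑ j ∈ range (M+1), G' j - ∑ j ∈ range (M+1), C j ≤ ∑' i, C (i + M) := by
      have h1 := hGpref_le_one (M+1)
      have h2 : ∑ j ∈ range M, C j ≤ ∑ j ∈ range (M+1), C j := by
        rw [Finset.sum_range_succ]
        linarith [hCnn M]
      linarith
    have hsum_tail_C : Summable (fun i => C (i + M)) := (summable_nat_add_iff M).mpr hCsummable
    have hsum_tail_φ : Summable (fun i => φC (i + M)) := (summable_nat_add_iff M).mpr hφC.summable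
    calc v M * (∑ j ∈ range (M+1), G' j - ∑ j ∈ range (M+1), C j)
        ≤ v M * ∑' i, C (i + M) := mul_le_mul_of_nonneg_left hA_le (hvnn M)
      _ = ∑' i, v M * C (i + M) := (tsum_mul_left).symm
      _ ≤ ∑' i, φC (i + M) := by
          apply Summable.tsum_le_tsum _ (hsum_tail_C.mul_left _) hsum_tail_φ
          intro i
          rw [hφCval (i + M), hvval M]
          rcases eq_or_lt_of_le (hCnn (i + M)) with h0 | h0
          · rw [← h0]; simp
          · have hle : C (i + M) ≤ C M := hCanti (by omega)
            have := Real.log_le_log h0 hle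
            nlinarith
    
  by_cases hposall : ∀ j, 0 < C j
  · -- infinite support case
    have hineq : ∀ M, ∑ j ∈ range (M+1), φG j ≤ L + ∑' i, φC (i + M) := by
      intro M
      have h1 := hchain M (fun j _ => hposall j)
      have h2 := htail_bound M (hposall M)
      linarith
    have htailL : ∀ M, ∑' i, φC (i + M) ≤ L := by
      intro M
      have := Summable.sum_add_tsum_nat_add M hφC.summable
      rw [hφC.tsum_eq] at this
      have hp : 0 ≤ ∑ j ∈ range M, φC j := Finset.sum_nonneg (fun j _ => hφCnn j)
      linarith
    have hφGsummable : Summable φG := by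
      apply summable_of_sum_range_le hφGnn (c := L + L)
      intro m
      rcases Nat.eq_zero_or_pos m with hm | hm
      · subst hm; simpa using (by linarith : (0:ℝ) ≤ L + L)
      · obtain ⟨M, rfl⟩ : ∃ M, m = M + 1 := ⟨m - 1, by omega⟩
        have ha := hineq M
        have hb := htailL M
        linarith
    have hφGhas : HasSum φG (∑' j, φG j) := hφGsummable.hasSum
    have htendL : Tendsto (fun M => L + ∑' i, φC (i + M)) atTop (nhds L) := by
      have := (tendsto_const_nhds (x := L) (f := atTop)).add (tendsto_sum_nat_add φC)
      simpa using this
    have htendG : Tendsto (fun M => ∑ j ∈ range (M+1), φG j) atTop (nhds (∑' j, φG j)) :=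
      hφGhas.tendsto_sum_nat.comp (tendsto_add_atTop_nat 1)
    have hfinal : ∑' j, φG j ≤ L := le_of_tendsto_of_tendsto' htendG htendL hineq
    -- conclude
    have hgoal : HasSum (fun i => G' i * Real.logb 2 (G' i)⁻¹) ((∑' j, φG j) / Real.log 2) := by
      have := hφGhas.div_const (Real.log 2)
      have heq : (fun i => φG i / Real.log 2) = fun i => G' i * Real.logb 2 (G' i)⁻¹ := by
        funext i
        rw [hent_form G' i, hφGval i]
      rwa [heq] at this
    rw [hgoal.tsum_eq]
    rw [div_le_iff₀ hlog2]
    exact hfinal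
  · -- finite support case
    push_neg at hposall
    have hexists : ∃ j, C j ≤ 0 := by
      obtain ⟨j1, hj1⟩ := hposall
      exact ⟨j1, hj1⟩
    set j0 := Nat.find hexists with hj0def
    have hj0 : C j0 ≤ 0 := Nat.find_spec hexists
    have hj0min : ∀ k, k < j0 → 0 < C k := by
      intro k hk
      have hne := Nat.find_min hexists hk
      exact lt_of_le_of_ne (hCnn k) (fun h => hne (le_of_eq h.symm))
    have hCzero : ∀ k, j0 ≤ k → C k = 0 :=
      fun k hk => le_antisymm (le_trans (hCanti hk) hj0) (hCnn k)
    have hCtail0 : ∑' i, C (i + j0) = 0 := by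
      have hz : (fun i => C (i + j0)) = fun _ => (0:ℝ) := funext fun i => hCzero _ (by omega)
      rw [hz, tsum_zero]
    have hCpre1 : ∑ j ∈ range j0, C j = 1 := by
      have := Summable.sum_add_tsum_nat_add j0 hCsummable
      rw [hCsum.tsum_eq, hCtail0] at this
      linarith
    have hGpre1 : ∑ j ∈ range j0, G' j = 1 :=
      le_antisymm (hGpref_le_one j0) (hCpre1 ▸ hpre j0)
    have hGtail0 : ∀ k, j0 ≤ k → G' k = 0 := by
      intro k hk
      have hsummable_tail : Summable (fun i => G' (i + j0)) :=
        (summable_nat_add_iff j0).mpr hGsummable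
      have hsumtail : ∑' i, G' (i + j0) = 0 := by
        have := Summable.sum_add_tsum_nat_add j0 hGsummable
        rw [hGsum.tsum_eq, hGpre1] at this
        linarith
      have hle := Summable.le_tsum hsummable_tail (k - j0) (fun i _ => hGnn _)
      rw [hsumtail] at hle
      have hkj : k - j0 + j0 = k := by omega
      rw [hkj] at hle
      exact le_antisymm hle (hGnn k)
    have hj0pos : 0 < j0 := by
      rcases Nat.eq_zero_or_pos j0 with h | h
      · exfalso
        rw [h] at hCpre1
        simp at hCpre1
      · exact h
    obtain ⟨M, hM⟩ : ∃ M, j0 = M + 1 := ⟨j0 - 1, by omega⟩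
    have hA0 : ∑ j ∈ range (M+1), G' j - ∑ j ∈ range (M+1), C j = 0 := by
      rw [← hM, hGpre1, hCpre1]
      ring
    have hch := hchain M (fun j hj => hj0min j (by omega))
    rw [hA0, mul_zero, add_zero] at hch
    have hφGzero : ∀ j ∉ range (M+1), φG j = 0 := by
      intro j hj
      rw [hφGval j, hGtail0 j (by simp only [mem_range] at hj; omega)]
      simp
    have hφGhas : HasSum φG (∑ j ∈ range (M+1), φG j) :=
      hasSum_sum_of_ne_finset_zero hφGzero
    have hgoal : HasSum (fun i => G' i * Real.logb 2 (G' i)⁻¹)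
        ((∑ j ∈ range (M+1), φG j) / Real.log 2) := by
      have hdiv := hφGhas.div_const (Real.log 2)
      have heq : (fun i => φG i / Real.log 2) = fun i => G' i * Real.logb 2 (G' i)⁻¹ := by
        funext i
        rw [hent_form G' i, hφGval i]
      rwa [heq] at hdiv
    rw [hgoal.tsum_eq, div_le_iff₀ hlog2]
    exact hch

end StepB

end GreedyMEC

end GreedyAux

/-- **Theorem 2 (greedy is optimal for majorizing sets).**
Let `p` be a sorted distribution on `n` states and let `G'` satisfy the recursion
`G' i = max_{1≤j≤n} (∑_{k=1}^{j} p k − ∑_{k<i} G' k)/j`.  Then `G'` is a probability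
distribution that couples every member of `MajorizingSet p`, and every distribution `C`
coupling `MajorizingSet p` has entropy `H(C) ≥ H(G')`
(the entropy of `C` is expressed through `HasSum`, so that distributions with divergent,
i.e. infinite, entropy satisfy the claim vacuously). -/
theorem greedy_optimal_for_majorizing_set
    (n : ℕ) [NeZero n] (p : Fin n → ℝ)
    (hsort : Antitone p) (hpos : ∀ k, 0 ≤ p k) (hsum : ∑ k, p k = 1)
    (G' : ℕ → ℝ)
    (hG' : ∀ i, G' i = univ.sup' univ_nonempty fun j : Fin n =>
      ((∑ k ∈ Iic j, p k) - ∑ k ∈ Finset.range i, G' k) / ((j : ℝ) + 1)) :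
    (∀ i, 0 ≤ G' i) ∧ Antitone G' ∧ HasSum G' 1 ∧
    (∀ q : Fin n → ℝ, MajMem p q → Couples G' q) ∧
    (∀ C : ℕ → ℝ, Antitone C → (∀ j, 0 ≤ C j) → HasSum C 1 →
      (∀ q : Fin n → ℝ, MajMem p q → Couples C q) →
      ∀ x : ℝ, HasSum (fun j => C j * Real.logb 2 (C j)⁻¹) x →
        (∑' i : ℕ, G' i * Real.logb 2 (G' i)⁻¹) ≤ x) := by
  have hSle : ∀ j : Fin n, ∑ k ∈ Iic j, p k ≤ 1 := by
    intro j
    rw [← hsum]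
    apply Finset.sum_le_sum_of_subset_of_nonneg (Finset.subset_univ _)
    intro k _ _
    exact hpos k
  have hIiclast : Iic (GreedyMEC.lastF n) = (univ : Finset (Fin n)) := by
    ext k
    simp only [mem_Iic, mem_univ, iff_true]
    apply Fin.le_def.mpr
    have := k.isLt
    simp only [GreedyMEC.lastF]
    omega
  have hlast : ∑ k ∈ Iic (GreedyMEC.lastF n), p k = 1 := by rw [hIiclast]; exact hsum
  have hG : ∀ i, G' i = GreedyMEC.gfun (fun j => ∑ k ∈ Iic j, p k)
      (∑ k ∈ Finset.range i, G' k) := fun i => hG' i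
  have hnn := GreedyMEC.G'_nonneg (fun j => ∑ k ∈ Iic j, p k) G' hSle hlast hG
  have hanti := GreedyMEC.G'_antitone (fun j => ∑ k ∈ Iic j, p k) G' hSle hlast hG
  have hhs := GreedyMEC.G'_hasSum (fun j => ∑ k ∈ Iic j, p k) G' hSle hlast hG
  have htend := GreedyMEC.prefix_tendsto (fun j => ∑ k ∈ Iic j, p k) G' hSle hlast hG
  refine ⟨hnn, hanti, hhs, ?_, ?_⟩
  · intro q hq
    exact GreedyMEC.couples_of_maj (fun j => ∑ k ∈ Iic j, p k) G' hnn hG htend q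
      hq.2.1 hq.2.2.1 hq.2.2.2
  · intro C hCanti hCnn hCsum hcoup x hx
    have hpre := GreedyMEC.prefix_le p C G' hlast hSle hCanti hCnn hCsum hcoup hG
    exact GreedyMEC.entropy_le G' C hnn hhs hCanti hCnn hCsum hpre x hx
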